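/- Let p be a prime and let e ≥ 1 and r ≥ 1 be integers. Then the natural action of GL_r(ℤ/p^eℤ) on (ℤ/p^eℤ)^r (by matrix-vector multiplication) has exactly e + 1 distinct orbits. -/

import Mathlib

/-- The orbit of a vector `v ∈ (ℤ/mℤ)^r` under the natural action of `GL_r(ℤ/mℤ)`
by matrix-vector multiplication. -/
def glOrbit (m r : ℕ) (v : Fin r → ZMod m) : Set (Fin r → ZMod m) :=
  {w | ∃ A : GL (Fin r) (ZMod m), (A : Matrix (Fin r) (Fin r) (ZMod m)).mulVec v = w}

open Matrix

lemma mem_glOrbit_self {m r : ℕ} (v : Fin r → ZMod m) : v ∈ glOrbit m r v :=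
  ⟨1, by simp⟩

lemma glOrbit_eq_of_mem {m r : ℕ} {v w : Fin r → ZMod m} (h : w ∈ glOrbit m r v) :
    glOrbit m r w = glOrbit m r v := by
  obtain ⟨A, rfl⟩ := h
  ext u
  constructor
  · rintro ⟨B, rfl⟩
    exact ⟨B * A, by rw [Units.val_mul, ← mulVec_mulVec]⟩
  · rintro ⟨B, rfl⟩
    refine ⟨B * A⁻¹, ?_⟩
    rw [Units.val_mul, mulVec_mulVec, mul_assoc, Units.inv_mul, mul_one]

lemma exists_pow_mul_unit (p e : ℕ) (hp : p.Prime) (x : ZMod (p ^ e)) :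
    ∃ k ≤ e, ∃ u : (ZMod (p ^ e))ˣ, x = (p : ZMod (p ^ e)) ^ k * u := by
  haveI : NeZero (p ^ e) := ⟨pow_ne_zero _ hp.pos.ne'⟩
  by_cases hx : x = 0
  · refine ⟨e, le_rfl, 1, ?_⟩
    rw [hx, Units.val_one, mul_one, ← Nat.cast_pow, ZMod.natCast_self]
  · have hn : x.val ≠ 0 := fun h => hx (by
      have := ZMod.natCast_rightInverse (n := p ^ e) x
      rw [← this, h, Nat.cast_zero])
    set n := x.val with hnn
    set k := n.factorization p with hk
    have hdvd : p ^ k ∣ n := Nat.ordProj_dvd n p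
    have hm : ¬ p ∣ n / p ^ k := Nat.not_dvd_ordCompl hp hn
    have hnm : p ^ k * (n / p ^ k) = n := Nat.ordProj_mul_ordCompl_eq_self n p
    have hke : k ≤ e := by
      have h1 : p ^ k ≤ n := Nat.le_of_dvd (Nat.pos_of_ne_zero hn) hdvd
      have h2 : n < p ^ e := ZMod.val_lt x
      exact le_of_lt ((Nat.pow_lt_pow_iff_right hp.one_lt).mp (lt_of_le_of_lt h1 h2))
    have hcop : (n / p ^ k).Coprime (p ^ e) :=
      Nat.Coprime.pow_right e ((hp.coprime_iff_not_dvd.mpr hm).symm)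
    refine ⟨k, hke, ZMod.unitOfCoprime _ hcop, ?_⟩
    have : ((p ^ k * (n / p ^ k) : ℕ) : ZMod (p ^ e)) = x := by
      rw [hnm]; exact ZMod.natCast_rightInverse x
    rw [← this]
    push_cast
    rw [ZMod.coe_unitOfCoprime]

/-- main construction: every vector is in the orbit of `Pi.single 0 (p^k)` for some `k ≤ e`. -/
lemma exists_rep (p e r : ℕ) (hp : p.Prime) (hr : 1 ≤ r) (v : Fin r → ZMod (p ^ e)) :
    ∃ k ≤ e, v ∈ glOrbit (p ^ e) r (Pi.single (⟨0, hr⟩ : Fin r) ((p : ZMod (p ^ e)) ^ k)) := by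
  classical
  set i0 : Fin r := ⟨0, hr⟩
  choose κ hκe u hu using fun i => exists_pow_mul_unit p e hp (v i)
  obtain ⟨j, -, hj⟩ := Finset.exists_min_image Finset.univ κ ⟨i0, Finset.mem_univ i0⟩
  set K := κ j with hK
  set w : Fin r → ZMod (p ^ e) := fun i => (p : ZMod (p ^ e)) ^ (κ i - K) * u i with hw
  have hvw : ∀ i, v i = (p : ZMod (p ^ e)) ^ K * w i := by
    intro i
    rw [hu i, hw]
    rw [← mul_assoc, ← pow_add, Nat.add_sub_cancel' (hj i (Finset.mem_univ i))]
  have hwj : IsUnit (w j) := by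
    rw [hw]; simp only [hK, Nat.sub_self, pow_zero, one_mul]; exact (u j).isUnit
  -- matrix B : identity with column j replaced by w
  set B : Matrix (Fin r) (Fin r) (ZMod (p ^ e)) := updateCol 1 j w with hB
  have hBdet : B.det = w j := by
    rw [hB, ← cramer_apply, cramer_one]; rfl
  have hBunit : IsUnit B := by
    rw [isUnit_iff_isUnit_det, hBdet]; exact hwj
  -- permutation matrix for swap i0 j
  set σ : Equiv.Perm (Fin r) := Equiv.swap i0 j with hσ
  set P : Matrix (Fin r) (Fin r) (ZMod (p ^ e)) := σ.permMatrix (ZMod (p ^ e)) with hP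
  have hPunit : IsUnit P := by
    rw [isUnit_iff_isUnit_det, hP, det_permutation]
    rcases Int.units_eq_one_or σ.sign with h | h <;> rw [h] <;> simp
  refine ⟨K, hκe j, hBunit.unit * hPunit.unit, ?_⟩
  have hcoe : (((hBunit.unit * hPunit.unit : (Matrix (Fin r) (Fin r) (ZMod (p ^ e)))ˣ) :
      GL (Fin r) (ZMod (p ^ e))) : Matrix (Fin r) (Fin r) (ZMod (p ^ e))) = B * P := by
    simp [Units.val_mul]
  rw [hcoe, ← mulVec_mulVec]
  have h1 : P.mulVec (Pi.single i0 ((p : ZMod (p ^ e)) ^ K)) =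
      Pi.single j ((p : ZMod (p ^ e)) ^ K) := by
    funext i
    simp only [mulVec_single, hP, Equiv.Perm.permMatrix, PEquiv.toMatrix_toPEquiv_eq,
      Pi.smul_apply, col_apply, op_smul_eq_mul, submatrix_apply, one_apply, Pi.single_apply]
    by_cases h : i = j
    · subst h; rw [if_pos rfl, if_pos (by simp [hσ]), one_mul]
    · rw [if_neg h, if_neg, zero_mul]
      intro hc
      apply h
      have hstep : σ i = σ j := by rw [hc]; simp [hσ]
      exact σ.injective hstep
  rw [h1]
  funext i
  simp only [mulVec_single, hB, Pi.smul_apply, col_apply, op_smul_eq_mul, updateCol_self]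
  rw [hvw i, mul_comm]

lemma orbit_single_le (p e r : ℕ) (hp : p.Prime) (hr : 1 ≤ r) (k k' : ℕ) (hk : k ≤ e)
    (hk' : k' ≤ e)
    (h : Pi.single (⟨0, hr⟩ : Fin r) ((p : ZMod (p ^ e)) ^ k) ∈
      glOrbit (p ^ e) r (Pi.single (⟨0, hr⟩ : Fin r) ((p : ZMod (p ^ e)) ^ k'))) : k' ≤ k := by
  classical
  obtain ⟨A, hA⟩ := h
  set i0 : Fin r := ⟨0, hr⟩
  have h2 := congrArg (fun z => ((p : ZMod (p ^ e)) ^ (e - k')) • z) hA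
  simp only [← mulVec_smul] at h2
  have hsingle : ∀ c : ZMod (p ^ e), ((p : ZMod (p ^ e)) ^ (e - k')) •
        (Pi.single i0 c : Fin r → ZMod (p ^ e)) =
      (Pi.single i0 (((p : ZMod (p ^ e)) ^ (e - k')) * c) : Fin r → ZMod (p ^ e)) := by
    intro c
    funext i
    simp [Pi.single_apply, mul_ite]
  rw [hsingle, hsingle, ← pow_add, Nat.sub_add_cancel hk', ← Nat.cast_pow,
    ZMod.natCast_self] at h2
  have h3 : (p : ZMod (p ^ e)) ^ (e - k' + k) = 0 := by
    have := congrFun h2 i0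
    simpa [Pi.single_apply, pow_add] using this.symm
  have h4 : (p : ℕ) ^ e ∣ p ^ (e - k' + k) := by
    rw [← ZMod.natCast_eq_zero_iff] at *
    push_cast at h3 ⊢
    exact h3
  have h5 : e ≤ e - k' + k := (Nat.pow_dvd_pow_iff_le_right hp.one_lt).mp h4
  omega

/-- For a prime `p` and integers `e ≥ 1`, `r ≥ 1`, the natural action of
`GL_r(ℤ/p^eℤ)` on `(ℤ/p^eℤ)^r` has exactly `e + 1` distinct orbits. -/
theorem card_gl_orbits_prime_power (p e r : ℕ) (hp : p.Prime) (he : 1 ≤ e) (hr : 1 ≤ r) :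
    Nat.card {S : Set (Fin r → ZMod (p ^ e)) //
        ∃ v : Fin r → ZMod (p ^ e), S = glOrbit (p ^ e) r v} = e + 1 := by
  classical
  set i0 : Fin r := ⟨0, hr⟩
  set g : Fin (e + 1) → {S : Set (Fin r → ZMod (p ^ e)) //
      ∃ v : Fin r → ZMod (p ^ e), S = glOrbit (p ^ e) r v} :=
    fun k => ⟨glOrbit (p ^ e) r (Pi.single i0 ((p : ZMod (p ^ e)) ^ (k : ℕ))),
      ⟨_, rfl⟩⟩ with hg
  have hbij : Function.Bijective g := by
    constructor
    · intro a b hab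
      have hset : glOrbit (p ^ e) r (Pi.single i0 ((p : ZMod (p ^ e)) ^ (a : ℕ))) =
          glOrbit (p ^ e) r (Pi.single i0 ((p : ZMod (p ^ e)) ^ (b : ℕ))) :=
        congrArg Subtype.val hab
      have ha : (a : ℕ) ≤ e := Nat.lt_succ_iff.mp a.isLt
      have hb : (b : ℕ) ≤ e := Nat.lt_succ_iff.mp b.isLt
      have m1 : Pi.single i0 ((p : ZMod (p ^ e)) ^ (a : ℕ)) ∈
          glOrbit (p ^ e) r (Pi.single i0 ((p : ZMod (p ^ e)) ^ (b : ℕ))) := by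
        rw [← hset]; exact mem_glOrbit_self _
      have m2 : Pi.single i0 ((p : ZMod (p ^ e)) ^ (b : ℕ)) ∈
          glOrbit (p ^ e) r (Pi.single i0 ((p : ZMod (p ^ e)) ^ (a : ℕ))) := by
        rw [hset]; exact mem_glOrbit_self _
      have := orbit_single_le p e r hp hr _ _ ha hb m1
      have := orbit_single_le p e r hp hr _ _ hb ha m2
      exact Fin.ext (le_antisymm ‹(a : ℕ) ≤ (b : ℕ)› ‹(b : ℕ) ≤ (a : ℕ)›)
    · rintro ⟨S, v, rfl⟩
      obtain ⟨k, hk, hmem⟩ := exists_rep p e r hp hr v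
      exact ⟨⟨k, Nat.lt_succ_of_le hk⟩, Subtype.ext (glOrbit_eq_of_mem hmem).symm⟩
  rw [← Nat.card_eq_of_bijective g hbij, Nat.card_eq_fintype_card, Fintype.card_fin]
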